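/- Let P₁, P₂ be sets of polynomials in ℝ[x₁,…,xₙ] and let S ⊆ ℝⁿ be a set with vanishing ideal I(S). Assume: (i) for every q ∈ I(S) and every ε > 0, q + ε lies in Σ + ⟨P₁⟩; (ii) for every p ∈ P₁ and every ε > 0, both p + ε and −p + ε lie in Σ + ⟨P₂⟩; and (iii) for every polynomial g ∈ ℝ[x₁,…,xₙ] there exists a real N > 0 such that N − (g² + 1) lies in Σ + ⟨P₂⟩. Then for every q ∈ I(S) and every ε > 0, q + ε lies in Σ + ⟨P₂⟩. -/

import Mathlib

/-- A polynomial is a sum of squares. -/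
def IsSOS {n : ℕ} (σ : MvPolynomial (Fin n) ℝ) : Prop :=
  ∃ (t : ℕ) (s : Fin t → MvPolynomial (Fin n) ℝ), σ = ∑ i, (s i) ^ 2

/-- `f` lies in `Σ + ⟨Q⟩`: it is a sum of squares plus an element of the ideal
generated by `Q`. -/
def MemSOSIdeal {n : ℕ} (Q : Set (MvPolynomial (Fin n) ℝ))
    (f : MvPolynomial (Fin n) ℝ) : Prop :=
  ∃ σ q, IsSOS σ ∧ q ∈ Ideal.span Q ∧ f = σ + q

lemma isSOS_iff_isSumSq {n : ℕ} {σ : MvPolynomial (Fin n) ℝ} :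
    IsSOS σ ↔ IsSumSq σ := by
  constructor
  · rintro ⟨t, s, rfl⟩
    have := IsSumSq.sum_mul_self (Finset.univ : Finset (Fin t)) s
    simpa [← sq] using this
  · intro h
    induction h with
    | zero => exact ⟨0, fun i => 0, by simp⟩
    | sq_add a _ ih =>
      obtain ⟨t, s, rfl⟩ := ih
      exact ⟨t + 1, Fin.cons a s, by simp [Fin.sum_univ_succ, sq]⟩

lemma IsSOS.add {n : ℕ} {a b : MvPolynomial (Fin n) ℝ} (ha : IsSOS a) (hb : IsSOS b) :
    IsSOS (a + b) := by
  rw [isSOS_iff_isSumSq] at *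
  exact ha.add hb

lemma IsSOS.const {n : ℕ} {c : ℝ} (hc : 0 ≤ c) : IsSOS (MvPolynomial.C (σ := Fin n) c) := by
  refine ⟨1, fun _ => MvPolynomial.C (Real.sqrt c), ?_⟩
  simp [← map_pow, Real.sq_sqrt hc]

lemma IsSOS.sq_mul {n : ℕ} {a : MvPolynomial (Fin n) ℝ} (s : MvPolynomial (Fin n) ℝ)
    (ha : IsSOS a) : IsSOS (s ^ 2 * a) := by
  obtain ⟨t, f, rfl⟩ := ha
  exact ⟨t, fun i => s * f i, by rw [Finset.mul_sum]; simp [mul_pow]⟩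

namespace MemSOSIdeal

variable {n : ℕ} {Q : Set (MvPolynomial (Fin n) ℝ)}

lemma add {f g : MvPolynomial (Fin n) ℝ} (hf : MemSOSIdeal Q f) (hg : MemSOSIdeal Q g) :
    MemSOSIdeal Q (f + g) := by
  obtain ⟨σ₁, q₁, hσ₁, hq₁, rfl⟩ := hf
  obtain ⟨σ₂, q₂, hσ₂, hq₂, rfl⟩ := hg
  exact ⟨σ₁ + σ₂, q₁ + q₂, hσ₁.add hσ₂, Ideal.add_mem _ hq₁ hq₂, by ring⟩

lemma of_isSOS {f : MvPolynomial (Fin n) ℝ} (hf : IsSOS f) : MemSOSIdeal Q f :=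
  ⟨f, 0, hf, Ideal.zero_mem _, by ring⟩

lemma sq_mul {f : MvPolynomial (Fin n) ℝ} (s : MvPolynomial (Fin n) ℝ)
    (hf : MemSOSIdeal Q f) : MemSOSIdeal Q (s ^ 2 * f) := by
  obtain ⟨σ, q, hσ, hq, rfl⟩ := hf
  exact ⟨s ^ 2 * σ, s ^ 2 * q, hσ.sq_mul s, Ideal.mul_mem_left _ _ hq, by ring⟩

lemma c_mul {f : MvPolynomial (Fin n) ℝ} {c : ℝ} (hc : 0 ≤ c)
    (hf : MemSOSIdeal Q f) : MemSOSIdeal Q (MvPolynomial.C c * f) := by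
  have : MvPolynomial.C (σ := Fin n) c = (MvPolynomial.C (Real.sqrt c)) ^ 2 := by
    rw [← map_pow, Real.sq_sqrt hc]
  rw [this]
  exact hf.sq_mul _

end MemSOSIdeal

theorem statement7 (n : ℕ) (P₁ P₂ : Set (MvPolynomial (Fin n) ℝ))
    (S : Set (Fin n → ℝ))
    (h1 : ∀ q : MvPolynomial (Fin n) ℝ, (∀ α ∈ S, MvPolynomial.eval α q = 0) →
      ∀ ε : ℝ, 0 < ε → MemSOSIdeal P₁ (q + MvPolynomial.C ε))
    (h12 : ∀ p ∈ P₁, ∀ ε : ℝ, 0 < ε →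
      MemSOSIdeal P₂ (p + MvPolynomial.C ε) ∧ MemSOSIdeal P₂ (-p + MvPolynomial.C ε))
    (harch : ∀ g : MvPolynomial (Fin n) ℝ, ∃ N : ℝ, 0 < N ∧
      MemSOSIdeal P₂ (MvPolynomial.C N - (g ^ 2 + 1))) :
    ∀ q : MvPolynomial (Fin n) ℝ, (∀ α ∈ S, MvPolynomial.eval α q = 0) →
      ∀ ε : ℝ, 0 < ε → MemSOSIdeal P₂ (q + MvPolynomial.C ε) := by
  have key : ∀ x : MvPolynomial (Fin n) ℝ, (∀ ε : ℝ, 0 < ε →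
      MemSOSIdeal P₂ (x + MvPolynomial.C ε) ∧ MemSOSIdeal P₂ (-x + MvPolynomial.C ε)) →
      ∀ g : MvPolynomial (Fin n) ℝ, ∀ δ : ℝ, 0 < δ →
        MemSOSIdeal P₂ (g * x + MvPolynomial.C δ) := by
    intro x hx g δ hδ
    obtain ⟨N, hN, hNmem⟩ := harch g
    set C : ℝ →+* MvPolynomial (Fin n) ℝ := MvPolynomial.C with hCdef
    set ε' : ℝ := 2 * δ / N with hε'
    have hε'pos : 0 < ε' := by positivity
    have hA := ((hx ε' hε'pos).1).sq_mul (g + 1)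
    have hB := ((hx ε' hε'pos).2).sq_mul (g - 1)
    have hD := hNmem.c_mul (c := 2 * ε') (by positivity)
    have hsum := (hA.add hB).add hD
    have hkey : (g + 1) ^ 2 * (x + C ε') + (g - 1) ^ 2 * (-x + C ε')
        + C (2 * ε') * (C N - (g ^ 2 + 1)) = C 4 * (g * x + C δ) := by
      have hc : 2 * ε' * N = 4 * δ := by
        rw [hε']; field_simp; ring
      have h2 : (C (2 * ε') : MvPolynomial (Fin n) ℝ) = 2 * C ε' := by
        rw [map_mul, map_ofNat]
      have hc' : (2 : MvPolynomial (Fin n) ℝ) * C ε' * C N = 4 * C δ := by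
        have h := congrArg C hc
        rw [map_mul, map_mul, map_ofNat, map_mul, map_ofNat] at h
        exact h
      have h4 : (C 4 : MvPolynomial (Fin n) ℝ) = 4 := map_ofNat C 4
      rw [h2, h4]
      linear_combination hc'
    rw [hkey] at hsum
    have h4 := hsum.c_mul (c := 1/4) (by norm_num)
    have h14 : (C (1/4) : MvPolynomial (Fin n) ℝ) * (C 4 * (g * x + C δ))
        = g * x + C δ := by
      rw [← mul_assoc, ← map_mul]; norm_num
    rwa [h14] at h4
  have span1 : ∀ x : MvPolynomial (Fin n) ℝ, x ∈ Ideal.span P₁ → ∀ δ : ℝ, 0 < δ →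
      MemSOSIdeal P₂ (x + MvPolynomial.C δ) ∧ MemSOSIdeal P₂ (-x + MvPolynomial.C δ) := by
    intro x hx
    induction hx using Submodule.span_induction with
    | mem p hp => exact fun δ hδ => h12 p hp δ hδ
    | zero =>
        intro δ hδ
        constructor <;>
          simpa using MemSOSIdeal.of_isSOS (IsSOS.const hδ.le)
    | add a b ha hb iha ihb =>
        intro δ hδ
        have h2 : 0 < δ / 2 := by positivity
        have hC : (MvPolynomial.C δ : MvPolynomial (Fin n) ℝ)
            = MvPolynomial.C (δ/2) + MvPolynomial.C (δ/2) := by rw [← map_add]; norm_num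
        constructor
        · have h := ((iha (δ/2) h2).1).add ((ihb (δ/2) h2).1)
          rw [hC]; convert h using 1; ring
        · have h := ((iha (δ/2) h2).2).add ((ihb (δ/2) h2).2)
          rw [hC]; convert h using 1; ring
    | smul a x hx ihx =>
        intro δ hδ
        constructor
        · simpa [smul_eq_mul] using key x ihx a δ hδ
        · have h := key x ihx (-a) δ hδ
          simpa [smul_eq_mul, neg_mul] using h
  intro q hq ε hε
  obtain ⟨σ, q', hσ, hq', heq⟩ := h1 q hq (ε/2) (by positivity)
  have hq'M := (span1 q' hq' (ε/2) (by positivity)).1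
  have htot : MemSOSIdeal P₂ (σ + (q' + MvPolynomial.C (ε/2))) :=
    (MemSOSIdeal.of_isSOS hσ).add hq'M
  have hCε : (MvPolynomial.C ε : MvPolynomial (Fin n) ℝ)
      = MvPolynomial.C (ε/2) + MvPolynomial.C (ε/2) := by rw [← map_add]; norm_num
  have heq2 : q + MvPolynomial.C ε = σ + (q' + MvPolynomial.C (ε/2)) := by
    rw [hCε, ← add_assoc, heq]; ring
  rwa [heq2]
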